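/- Let B be the abelian group of finitely/boundedly supported functions ℚ → ℚ (pointwise addition), on which ℚ acts by translation (r·f)(x) = f(x + r), and let P = B ⋊ ℚ be the semidirect product. Then the element (δ₀, 2) of P has no square root in P, where δ₀ is the indicator-like function with δ₀(0) = 1 and δ₀(x) = 0 for x ≠ 0. -/

import Mathlib

/-- In the semidirect product `P = B ⋊ ℚ`, where `B` is the group of boundedly supported
functions `ℚ → ℚ` and `ℚ` acts by translation, the element `(δ₀, 2)` has no square root:
there is no boundedly supported `g` and `s : ℚ` with
`(g, s)² = (g + s·g, s + s) = (δ₀, 2)`. -/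
theorem stmt14 :
    ¬ ∃ (g : ℚ → ℚ) (s : ℚ),
        (∃ b : ℚ, ∀ x : ℚ, b < x → g x = 0 ∧ g (-x) = 0) ∧
        (∀ x : ℚ, g x + g (x + s) = if x = 0 then 1 else 0) ∧
        s + s = 2 := by
  rintro ⟨g, s, ⟨b, hb⟩, h2, hs⟩
  have hs1 : s = 1 := by linarith
  subst hs1
  have hzero : ∀ x : ℚ, x ≠ 0 → g x + g (x + 1) = 0 := by
    intro x hx
    have := h2 x
    simpa [hx] using this
  -- g (1 + n) = (-1)^n * g 1
  have hpos : ∀ n : ℕ, g (1 + n) = (-1 : ℚ)^n * g 1 := by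
    intro n
    induction n with
    | zero => simp
    | succ n ih =>
      have hx : (1 + (n : ℚ)) ≠ 0 := by positivity
      have := hzero (1 + n) hx
      have : g (1 + (n + 1 : ℕ)) = - g (1 + n) := by
        push_cast
        push_cast at this
        have e : (1 + ((n : ℚ) + 1)) = 1 + n + 1 := by ring
        rw [e]
        linarith
      rw [this, ih]
      ring
  have hneg : ∀ n : ℕ, g (-(1 + n)) = (-1 : ℚ)^n * g (-1) := by
    intro n
    induction n with
    | zero => simp
    | succ n ih =>
      have hx : (-(1 + (n + 1 : ℕ)) : ℚ) ≠ 0 := by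
        push_cast
        intro h; nlinarith [Nat.cast_nonneg (α := ℚ) n]
      have := hzero _ hx
      have h' : g (-(1 + (n : ℚ))) = - g (-(1 + (n + 1 : ℕ)))  := by
        push_cast
        push_cast at this
        have e : (-(1 + ((n : ℚ) + 1)) + 1) = -(1 + n) := by ring
        rw [e] at this
        linarith
      push_cast at ih h' ⊢
      have : g (-(1 + ((n : ℚ) + 1))) = - g (-(1 + n)) := by linarith
      rw [this, ih]; ring
  -- choose N with b < 1 + N
  obtain ⟨N, hN⟩ := exists_nat_gt (b - 1)
  have hbN : b < 1 + N := by push_cast at hN ⊢; linarith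
  have hgz := hb (1 + N) hbN
  have hg1 : g 1 = 0 := by
    have := hpos N
    rw [hgz.1] at this
    have hne : ((-1 : ℚ)^N) ≠ 0 := by
      exact pow_ne_zero _ (by norm_num)
    field_simp at this
    exact (mul_eq_zero.mp this.symm).resolve_left hne
  have hgm1 : g (-1) = 0 := by
    have := hneg N
    rw [hgz.2] at this
    have hne : ((-1 : ℚ)^N) ≠ 0 := pow_ne_zero _ (by norm_num)
    field_simp at this
    exact (mul_eq_zero.mp this.symm).resolve_left hne
  have h0 : g 0 = 0 := by
    have := hzero (-1) (by norm_num)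
    norm_num at this
    linarith
  have := h2 0
  simp [h0, hg1] at this
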